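/- Let h(x) = x^6 + a_1 x^5 + a_2 x^4 + a_3 x^3 + a_2 q x^2 + a_1 q^2 x + q^3 with a_1, a_2, a_3 ∈ ℤ and q a positive integer. Then h is a q-Weil polynomial if and only if all of the following hold: (a) |a_1| ≤ 6√q; (b) 4√q|a_1| − 9q ≤ a_2; (c) a_2 ≤ a_1^2/3 + 3q; (d) −(2/27)a_1^3 + (1/3)a_1a_2 + q a_1 − (2/27)(a_1^2 − 3a_2 + 9q)^{3/2} ≤ a_3 ≤ −(2/27)a_1^3 + (1/3)a_1a_2 + q a_1 + (2/27)(a_1^2 − 3a_2 + 9q)^{3/2}; and (e) −2qa_1 − 2√q a_2 − 2q√q ≤ a_3 ≤ −2qa_1 + 2√q a_2 + 2q√q. (The quantity a_1^2 − 3a_2 + 9q in (d) is non-negative by (c).) -/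

import Mathlib

open Polynomial

/-- `h` is a `q`-Weil polynomial of degree `2*g`: its complex roots consist of
`g` conjugate pairs, each of complex absolute value `√q`. -/
def IsWeil (q g : ℕ) (h : Polynomial ℤ) : Prop :=
  ∃ w : Fin g → ℂ,
    (∀ i, ‖w i‖ = Real.sqrt q) ∧
    h.map (Int.castRingHom ℂ) =
      ∏ i, ((Polynomial.X - Polynomial.C (w i)) *
            (Polynomial.X - Polynomial.C ((starRingEnd ℂ) (w i))))



lemma lemA (r x A : ℝ) (hr : 0 ≤ r) (hrA : r ≤ A) (hrx : r ≤ x) (hx2 : x ≤ 2*r)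
    (hf : x^3 - 3*r^2*x ≤ A^3 - 3*r^2*A) : x ≤ A := by
  by_contra hc
  push_neg at hc
  rcases eq_or_lt_of_le hr with h0 | h0
  · linarith
  · have hxr : r < x := lt_of_le_of_lt hrA hc
    have h2 : 0 < x^2 + x*A + A^2 - 3*r^2 := by nlinarith
    nlinarith [mul_pos (sub_pos.2 hc) h2]

lemma lemB (m : ℝ) (hm : |m| ≤ 1) : ∃ c : ℝ, 1/2 ≤ c ∧ c ≤ 1 ∧ 4*c^3 - 3*c = m := by
  have hcont : ContinuousOn (fun c : ℝ => 4*c^3 - 3*c) (Set.Icc (1/2) 1) := by fun_prop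
  have h := intermediate_value_Icc (by norm_num : (1/2:ℝ) ≤ 1) hcont
  have hm' : m ∈ Set.Icc ((fun c : ℝ => 4*c^3 - 3*c) (1/2)) ((fun c : ℝ => 4*c^3 - 3*c) 1) := by
    rw [abs_le] at hm
    constructor <;> simp <;> [linarith [hm.1]; linarith [hm.2]]
  obtain ⟨c, hc, hfc⟩ := h hm'
  exact ⟨c, hc.1, hc.2, hfc⟩

set_option maxHeartbeats 1000000 in
lemma mainRev (s A1 A2 A3 : ℝ) (hs : 0 < s)
    (c1 : |A1| ≤ 6*s) (c2 : 4*s*|A1| - 9*s^2 ≤ A2) (c3 : A2 ≤ A1^2/3 + 3*s^2)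
    (c4l : -(2/27)*A1^3 + (1/3)*A1*A2 + s^2*A1 - (2/27)*(Real.sqrt (A1^2-3*A2+9*s^2))^3 ≤ A3)
    (c4u : A3 ≤ -(2/27)*A1^3 + (1/3)*A1*A2 + s^2*A1 + (2/27)*(Real.sqrt (A1^2-3*A2+9*s^2))^3)
    (c5l : -2*s^2*A1 - 2*s*A2 - 2*s^2*s ≤ A3) (c5u : A3 ≤ -2*s^2*A1 + 2*s*A2 + 2*s^2*s) :
    ∃ b1 b2 b3 : ℝ, |b1| ≤ 2*s ∧ |b2| ≤ 2*s ∧ |b3| ≤ 2*s ∧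
      b1+b2+b3 = -A1 ∧ b1*b2+b1*b3+b2*b3 = A2 - 3*s^2 ∧ b1*b2*b3 = 2*s^2*A1 - A3 := by
  have habs := abs_le.mp c1
  have hab0 := abs_nonneg A1
  have hD : (0:ℝ) ≤ A1^2 - 3*A2 + 9*s^2 := by linarith
  set r := Real.sqrt (A1^2-3*A2+9*s^2) with hrdef
  have hr : 0 ≤ r := Real.sqrt_nonneg _
  have hr2 : r^2 = A1^2-3*A2+9*s^2 := Real.sq_sqrt hD
  clear_value r
  -- r ≤ 6s - |A1|
  have hrb : r ≤ 6*s - |A1| := by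
    have h1 : A1^2 - 3*A2 + 9*s^2 ≤ (6*s - |A1|)^2 := by
      have hsq : |A1|^2 = A1^2 := sq_abs A1
      nlinarith
    calc r = Real.sqrt (A1^2-3*A2+9*s^2) := hrdef
    _ ≤ Real.sqrt ((6*s - |A1|)^2) := Real.sqrt_le_sqrt h1
    _ = 6*s - |A1| := Real.sqrt_sq (by linarith)
  have hrA : r ≤ 6*s + A1 := by rcases abs_cases A1 with ⟨h,_⟩|⟨h,_⟩ <;> rw [h] at hrb <;> linarith
  have hrA' : r ≤ 6*s - A1 := by rcases abs_cases A1 with ⟨h,_⟩|⟨h,_⟩ <;> rw [h] at hrb <;> linarith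
  have hPu : -2*A1^3 + 9*A1*A2 + 27*s^2*A1 - 27*A3 ≤ 2*r^3 := by linarith
  have hPl : -(2*r^3) ≤ -2*A1^3 + 9*A1*A2 + 27*s^2*A1 - 27*A3 := by linarith
  obtain ⟨c, hc1, hc2, hcm⟩ : ∃ c : ℝ, 1/2 ≤ c ∧ c ≤ 1 ∧
      2*r^3*(4*c^3-3*c) = -2*A1^3 + 9*A1*A2 + 27*s^2*A1 - 27*A3 := by
    rcases eq_or_lt_of_le hr with h0 | h0
    · have hr0 : r = 0 := h0.symm
      rw [hr0] at hPu hPl ⊢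
      refine ⟨1, by norm_num, le_refl 1, by norm_num; linarith⟩
    · have hr3 : 0 < 2*r^3 := by positivity
      obtain ⟨c, h1, h2, h3⟩ := lemB ((-2*A1^3 + 9*A1*A2 + 27*s^2*A1 - 27*A3)/(2*r^3))
        (by rw [abs_le]; constructor
            · rw [le_div_iff₀ hr3]; linarith
            · rw [div_le_iff₀ hr3]; linarith)
      refine ⟨c, h1, h2, ?_⟩
      rw [h3]; field_simp
  have hc0 : (0:ℝ) ≤ c := by linarith
  have h1c2 : (0:ℝ) ≤ 1 - c^2 := by nlinarith
  have hvnn : (0:ℝ) ≤ 3*r^2*(1-c^2) := by positivity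
  set v := Real.sqrt (3*r^2*(1-c^2)) with hvdef
  have hv : 0 ≤ v := Real.sqrt_nonneg _
  have hv2 : v^2 = 3*r^2*(1-c^2) := Real.sq_sqrt hvnn
  clear_value v
  -- bounds for v
  have hvu : v ≤ r*(2-c) := by
    calc v = Real.sqrt (3*r^2*(1-c^2)) := hvdef
    _ ≤ Real.sqrt ((r*(2-c))^2) := Real.sqrt_le_sqrt (by nlinarith [sq_nonneg (2*c-1), sq_nonneg r])
    _ = r*(2-c) := Real.sqrt_sq (by nlinarith)
  have hvu2 : v ≤ r*(1+c) := by
    calc v = Real.sqrt (3*r^2*(1-c^2)) := hvdef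
    _ ≤ Real.sqrt ((r*(1+c))^2) := Real.sqrt_le_sqrt (by nlinarith [sq_nonneg (2*c-1), sq_nonneg r])
    _ = r*(1+c) := Real.sqrt_sq (by nlinarith)
  have hvltc : r*(1-c) ≤ v := by
    calc r*(1-c) = Real.sqrt ((r*(1-c))^2) := (Real.sqrt_sq (by nlinarith)).symm
    _ ≤ Real.sqrt (3*r^2*(1-c^2)) := Real.sqrt_le_sqrt (by nlinarith [sq_nonneg r, mul_nonneg hr hc0])
    _ = v := hvdef.symm
  have hrc0 : 0 ≤ r*c := mul_nonneg hr hc0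
  have hrc1 : r*c ≤ r := by nlinarith
  -- keys
  have key1 : (6*s+A1)^3 - 3*r^2*(6*s+A1) = 54*s^3+81*s^2*A1-2*A1^3+54*s*A2+9*A1*A2 := by
    linear_combination (-3*(6*s+A1)) * hr2
  have key2 : (6*s-A1)^3 - 3*r^2*(6*s-A1) = 54*s^3-81*s^2*A1+2*A1^3+54*s*A2-9*A1*A2 := by
    linear_combination (-3*(6*s-A1)) * hr2
  have hflow : (r*c+v)^3 - 3*r^2*(r*c+v) = -(2*r^3*(4*c^3-3*c)) := by
    linear_combination (3*r*c + v) * hv2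
  have hbig : 2*r*c ≤ 6*s + A1 := by
    apply lemA r (2*r*c) (6*s+A1) hr hrA (by linarith [mul_nonneg hr (by linarith : (0:ℝ) ≤ 2*c-1)]) (by linarith)
    rw [key1]
    nlinarith [hcm]
  have hlow : r*c + v ≤ 6*s - A1 := by
    apply lemA r (r*c+v) (6*s-A1) hr hrA' (by linarith) (by linarith)
    rw [key2, hflow]
    linarith
  refine ⟨(-A1 + 2*r*c)/3, (-A1 - r*c + v)/3, (-A1 - r*c - v)/3, ?_, ?_, ?_, by ring, ?_, ?_⟩
  · rw [abs_le]; constructor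
    · rw [le_div_iff₀ (by norm_num : (0:ℝ) < 3)]; linarith
    · rw [div_le_iff₀ (by norm_num : (0:ℝ) < 3)]; linarith
  · rw [abs_le]
    constructor
    · rw [le_div_iff₀ (by norm_num : (0:ℝ) < 3)]; linarith
    · rw [div_le_iff₀ (by norm_num : (0:ℝ) < 3)]; linarith
  · rw [abs_le]
    constructor
    · rw [le_div_iff₀ (by norm_num : (0:ℝ) < 3)]; linarith
    · rw [div_le_iff₀ (by norm_num : (0:ℝ) < 3)]; linarith
  · linear_combination (-1/9 : ℝ) * hv2 + (-1/3 : ℝ) * hr2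
  · linear_combination ((A1 - 2*r*c)/27) * hv2 + (1/27) * hcm + (A1/9) * hr2


set_option maxHeartbeats 1000000 in
lemma mainFwd (s A1 A2 A3 b1 b2 b3 : ℝ) (hs : 0 < s)
    (h1 : |b1| ≤ 2*s) (h2 : |b2| ≤ 2*s) (h3 : |b3| ≤ 2*s)
    (e1 : b1+b2+b3 = -A1) (e2 : b1*b2+b1*b3+b2*b3 = A2 - 3*s^2)
    (e3 : b1*b2*b3 = 2*s^2*A1 - A3) :
    |A1| ≤ 6*s ∧ 4*s*|A1| - 9*s^2 ≤ A2 ∧ A2 ≤ A1^2/3 + 3*s^2 ∧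
    (-(2/27)*A1^3 + (1/3)*A1*A2 + s^2*A1 - (2/27)*(Real.sqrt (A1^2-3*A2+9*s^2))^3 ≤ A3 ∧
     A3 ≤ -(2/27)*A1^3 + (1/3)*A1*A2 + s^2*A1 + (2/27)*(Real.sqrt (A1^2-3*A2+9*s^2))^3) ∧
    (-2*s^2*A1 - 2*s*A2 - 2*s^2*s ≤ A3 ∧ A3 ≤ -2*s^2*A1 + 2*s*A2 + 2*s^2*s) := by
  rw [abs_le] at h1 h2 h3
  obtain ⟨l1, u1⟩ := h1; obtain ⟨l2, u2⟩ := h2; obtain ⟨l3, u3⟩ := h3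
  have hA1 : A1 = -(b1+b2+b3) := by linarith
  subst hA1
  have hA2 : A2 = b1*b2+b1*b3+b2*b3 + 3*s^2 := by linarith
  subst hA2
  have hA3 : A3 = 2*s^2*(-(b1+b2+b3)) - b1*b2*b3 := by linarith
  subst hA3
  have hD : (0:ℝ) ≤ (-(b1+b2+b3))^2 - 3*(b1*b2+b1*b3+b2*b3 + 3*s^2) + 9*s^2 := by
    nlinarith [sq_nonneg (b1-b2), sq_nonneg (b1-b3), sq_nonneg (b2-b3)]
  set r := Real.sqrt ((-(b1+b2+b3))^2 - 3*(b1*b2+b1*b3+b2*b3 + 3*s^2) + 9*s^2) with hrdef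
  have hr : 0 ≤ r := Real.sqrt_nonneg _
  have hr2 : r^2 = b1^2+b2^2+b3^2 - (b1*b2+b1*b3+b2*b3) := by
    rw [hrdef, Real.sq_sqrt hD]; ring
  have hP2 : ((3*b1 - (b1+b2+b3)) * (3*b2 - (b1+b2+b3)) * (3*b3 - (b1+b2+b3)))^2 ≤ 4*(r^2)^3 := by
    rw [hr2]
    nlinarith [sq_nonneg ((b1-b2)*(b1-b3)*(b2-b3))]
  have hPu : (3*b1 - (b1+b2+b3)) * (3*b2 - (b1+b2+b3)) * (3*b3 - (b1+b2+b3)) ≤ 2*r^3 := by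
    nlinarith [pow_nonneg hr 3, hP2]
  have hPl : -(2*r^3) ≤ (3*b1 - (b1+b2+b3)) * (3*b2 - (b1+b2+b3)) * (3*b3 - (b1+b2+b3)) := by
    nlinarith [pow_nonneg hr 3, hP2]
  refine ⟨?_, ?_,
    by linarith [sq_nonneg (b1-b2), sq_nonneg (b1-b3), sq_nonneg (b2-b3)],
    ⟨by linarith [hPu], by linarith [hPl]⟩, ?_, ?_⟩
  · rw [abs_le]; constructor <;> linarith
  · rcases abs_cases (-(b1+b2+b3)) with ⟨h, _⟩ | ⟨h, _⟩ <;> rw [h]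
    · linarith [mul_nonneg (by linarith : (0:ℝ) ≤ 2*s + b1) (by linarith : (0:ℝ) ≤ 2*s + b2),
        mul_nonneg (by linarith : (0:ℝ) ≤ 2*s + b1) (by linarith : (0:ℝ) ≤ 2*s + b3),
        mul_nonneg (by linarith : (0:ℝ) ≤ 2*s + b2) (by linarith : (0:ℝ) ≤ 2*s + b3)]
    · linarith [mul_nonneg (by linarith : (0:ℝ) ≤ 2*s - b1) (by linarith : (0:ℝ) ≤ 2*s - b2),
        mul_nonneg (by linarith : (0:ℝ) ≤ 2*s - b1) (by linarith : (0:ℝ) ≤ 2*s - b3),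
        mul_nonneg (by linarith : (0:ℝ) ≤ 2*s - b2) (by linarith : (0:ℝ) ≤ 2*s - b3)]
  · linarith [mul_nonneg (mul_nonneg (by linarith : (0:ℝ) ≤ 2*s - b1) (by linarith : (0:ℝ) ≤ 2*s - b2)) (by linarith : (0:ℝ) ≤ 2*s - b3)]
  · linarith [mul_nonneg (mul_nonneg (by linarith : (0:ℝ) ≤ 2*s + b1) (by linarith : (0:ℝ) ≤ 2*s + b2)) (by linarith : (0:ℝ) ≤ 2*s + b3)]

lemma quad_prod (x y z t : ℂ) :
    (X^2 - C x * X + C t) * (X^2 - C y * X + C t) * (X^2 - C z * X + C t) =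
      X^6 - C (x+y+z) * X^5 + C (x*y+x*z+y*z + 3*t) * X^4
        - C (x*y*z + 2*t*(x+y+z)) * X^3 + C (t*(x*y+x*z+y*z) + 3*t^2) * X^2
        - C (t^2*(x+y+z)) * X + C (t^3) := by
  simp only [map_add, map_mul, map_pow, map_ofNat]
  ring

lemma map_explicit (q : ℕ) (a1 a2 a3 : ℤ) :
    (X^6 + C a1*X^5 + C a2*X^4 + C a3*X^3 + C (a2*(q:ℤ))*X^2 + C (a1*(q:ℤ)^2)*X + C ((q:ℤ)^3) : ℤ[X]).map (Int.castRingHom ℂ) =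
    X^6 + C ((a1:ℂ))*X^5 + C ((a2:ℂ))*X^4 + C ((a3:ℂ))*X^3 + C ((a2:ℂ)*(q:ℂ))*X^2
      + C ((a1:ℂ)*(q:ℂ)^2)*X + C ((q:ℂ)^3) := by
  simp only [Polynomial.map_add, Polynomial.map_mul, Polynomial.map_pow, Polynomial.map_X,
    Polynomial.map_C, eq_intCast, Int.cast_mul, Int.cast_pow, Int.cast_natCast,
    Polynomial.map_intCast, Polynomial.map_natCast, map_mul, map_pow,
    Polynomial.C_eq_intCast, Polynomial.C_eq_natCast]

lemma pair_quad (z : ℂ) (q : ℕ) (b : ℝ) (hre : 2*z.re = b)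
    (habs : ‖z‖ = Real.sqrt q) :
    (X - C z) * (X - C ((starRingEnd ℂ) z)) =
      X^2 - C ((b:ℝ) : ℂ) * X + C ((q:ℂ)) := by
  have h1 : z + (starRingEnd ℂ) z = ((b:ℝ) : ℂ) := by
    rw [Complex.add_conj, hre]
  have h2 : z * (starRingEnd ℂ) z = ((q:ℂ)) := by
    rw [Complex.mul_conj]
    norm_cast
    rw [← Complex.sq_norm, habs, Real.sq_sqrt (Nat.cast_nonneg q)]
  rw [← h1, ← h2]
  simp only [map_add, map_mul]
  ring

lemma coeff_extract (c5 c4 c3 c2 c1 c0 d5 d4 d3 d2 d1 d0 : ℂ)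
    (h : X^6 + C c5 * X^5 + C c4 * X^4 + C c3 * X^3 + C c2 * X^2 + C c1 * X + C c0 =
         X^6 - C d5 * X^5 + C d4 * X^4 - C d3 * X^3 + C d2 * X^2 - C d1 * X + C d0) :
    c5 = -d5 ∧ c4 = d4 ∧ c3 = -d3 := by
  refine ⟨?_, ?_, ?_⟩
  · have := congrArg (fun p => coeff p 5) h
    simpa [coeff_add, coeff_sub, coeff_C_mul, coeff_X_pow, coeff_C, coeff_X] using this
  · have := congrArg (fun p => coeff p 4) h
    simpa [coeff_add, coeff_sub, coeff_C_mul, coeff_X_pow, coeff_C, coeff_X] using this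
  · have := congrArg (fun p => coeff p 3) h
    simpa [coeff_add, coeff_sub, coeff_C_mul, coeff_X_pow, coeff_C, coeff_X] using this

set_option maxHeartbeats 1000000 in
lemma weil_iff (q : ℕ) (a1 a2 a3 : ℤ) :
    IsWeil q 3 (X^6 + C a1*X^5 + C a2*X^4 + C a3*X^3 + C (a2*(q:ℤ))*X^2 + C (a1*(q:ℤ)^2)*X + C ((q:ℤ)^3)) ↔
    ∃ b1 b2 b3 : ℝ, |b1| ≤ 2*Real.sqrt q ∧ |b2| ≤ 2*Real.sqrt q ∧ |b3| ≤ 2*Real.sqrt q ∧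
      b1+b2+b3 = -(a1:ℝ) ∧ b1*b2+b1*b3+b2*b3 = (a2:ℝ) - 3*(q:ℝ) ∧ b1*b2*b3 = 2*(q:ℝ)*(a1:ℝ) - (a3:ℝ) := by
  constructor
  · rintro ⟨w, habs, heq⟩
    rw [map_explicit, Fin.prod_univ_three, pair_quad _ _ _ rfl (habs 0),
      pair_quad _ _ _ rfl (habs 1), pair_quad _ _ _ rfl (habs 2), quad_prod] at heq
    obtain ⟨h5, h4, h3⟩ := coeff_extract _ _ _ _ _ _ _ _ _ _ _ _ heq
    set b1 : ℝ := 2*(w 0).re with hb1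
    set b2 : ℝ := 2*(w 1).re with hb2
    set b3 : ℝ := 2*(w 2).re with hb3
    have hb : ∀ i : Fin 3, |2*(w i).re| ≤ 2*Real.sqrt q := by
      intro i
      rw [abs_mul, abs_two]
      have := Complex.abs_re_le_norm (w i)
      rw [habs i] at this
      linarith
    refine ⟨b1, b2, b3, hb 0, hb 1, hb 2, ?_, ?_, ?_⟩
    · have : ((b1+b2+b3 : ℝ) : ℂ) = ((-(a1:ℝ) : ℝ) : ℂ) := by push_cast; linear_combination h5
      exact_mod_cast this
    · have : ((b1*b2+b1*b3+b2*b3 : ℝ) : ℂ) = (((a2:ℝ) - 3*(q:ℝ) : ℝ) : ℂ) := by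
        push_cast; linear_combination -h4
      exact_mod_cast this
    · have : ((b1*b2*b3 : ℝ) : ℂ) = ((2*(q:ℝ)*(a1:ℝ) - (a3:ℝ) : ℝ) : ℂ) := by
        push_cast; linear_combination h3 - 2*(q:ℂ)*h5
      exact_mod_cast this
  · rintro ⟨b1, b2, b3, h1, h2, h3, e1, e2, e3⟩
    have hbsq : ∀ b : ℝ, |b| ≤ 2*Real.sqrt q → (0:ℝ) ≤ (q:ℝ) - (b/2)^2 := by
      intro b hb
      have h4 : b^2 ≤ (2*Real.sqrt q)^2 := by
        rw [← sq_abs]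
        exact pow_le_pow_left₀ (abs_nonneg b) hb 2
      rw [mul_pow, Real.sq_sqrt (Nat.cast_nonneg q)] at h4
      nlinarith
    have hball : ∀ i : Fin 3, |![b1,b2,b3] i| ≤ 2*Real.sqrt q := by
      intro i; fin_cases i <;> simpa using ‹_›
    refine ⟨fun i => Complex.mk ((![b1,b2,b3] i)/2) (Real.sqrt ((q:ℝ) - ((![b1,b2,b3] i)/2)^2)),
      ?_, ?_⟩
    · intro i
      rw [Complex.norm_def, Complex.normSq_mk,
        Real.mul_self_sqrt (hbsq _ (hball i))]
      congr 1
      ring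
    · have hre : ∀ i : Fin 3,
        2*(Complex.mk ((![b1,b2,b3] i)/2) (Real.sqrt ((q:ℝ) - ((![b1,b2,b3] i)/2)^2))).re
          = ![b1,b2,b3] i := by
        intro i; simp; ring
      have habs' : ∀ i : Fin 3,
          ‖Complex.mk ((![b1,b2,b3] i)/2) (Real.sqrt ((q:ℝ) - ((![b1,b2,b3] i)/2)^2))‖
            = Real.sqrt q := by
        intro i
        rw [Complex.norm_def, Complex.normSq_mk, Real.mul_self_sqrt (hbsq _ (hball i))]
        congr 1
        ring
      rw [map_explicit, Fin.prod_univ_three,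
        pair_quad _ _ _ (hre 0) (habs' 0), pair_quad _ _ _ (hre 1) (habs' 1),
        pair_quad _ _ _ (hre 2) (habs' 2), quad_prod]
      simp only [Matrix.cons_val_zero, Matrix.cons_val_one, Matrix.head_cons,
        Matrix.cons_val_two, Matrix.tail_cons]
      have hc1 : ((b1:ℂ)) + ((b2:ℂ)) + ((b3:ℂ)) = -((a1:ℂ)) := by
        have := congrArg (fun x : ℝ => (x:ℂ)) e1
        push_cast at this ⊢
        exact this
      have hc2 : (b1:ℂ)*(b2:ℂ) + (b1:ℂ)*(b3:ℂ) + (b2:ℂ)*(b3:ℂ) = (a2:ℂ) - 3*(q:ℂ) := by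
        have := congrArg (fun x : ℝ => (x:ℂ)) e2
        push_cast at this ⊢
        linear_combination this
      have hc3 : (b1:ℂ)*(b2:ℂ)*(b3:ℂ) = 2*(q:ℂ)*(a1:ℂ) - (a3:ℂ) := by
        have := congrArg (fun x : ℝ => (x:ℂ)) e3
        push_cast at this ⊢
        linear_combination this
      rw [hc3, hc2, hc1]
      simp only [map_add, map_mul, map_sub, map_neg, map_pow, map_ofNat]
      push_cast
      ring

theorem stmt18 (q : ℕ) (hq : 0 < q) (a1 a2 a3 : ℤ) :
    IsWeil q 3
      (X ^ 6 + C a1 * X ^ 5 + C a2 * X ^ 4 + C a3 * X ^ 3 +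
        C (a2 * q) * X ^ 2 + C (a1 * q ^ 2) * X + C ((q : ℤ) ^ 3)) ↔
      (|(a1 : ℝ)| ≤ 6 * Real.sqrt q ∧
        4 * Real.sqrt q * |(a1 : ℝ)| - 9 * q ≤ (a2 : ℝ) ∧
        (a2 : ℝ) ≤ (a1 : ℝ) ^ 2 / 3 + 3 * q ∧
        (-(2 / 27) * (a1 : ℝ) ^ 3 + (1 / 3) * a1 * a2 + q * a1 -
            (2 / 27) * (Real.sqrt ((a1 : ℝ) ^ 2 - 3 * a2 + 9 * q)) ^ 3 ≤ (a3 : ℝ) ∧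
          (a3 : ℝ) ≤ -(2 / 27) * (a1 : ℝ) ^ 3 + (1 / 3) * a1 * a2 + q * a1 +
            (2 / 27) * (Real.sqrt ((a1 : ℝ) ^ 2 - 3 * a2 + 9 * q)) ^ 3) ∧
        (-2 * q * (a1 : ℝ) - 2 * Real.sqrt q * a2 - 2 * q * Real.sqrt q ≤ (a3 : ℝ) ∧
          (a3 : ℝ) ≤ -2 * q * (a1 : ℝ) + 2 * Real.sqrt q * a2 + 2 * q * Real.sqrt q)) := by
  rw [weil_iff q a1 a2 a3]
  have hq0 : (0:ℝ) < (q:ℝ) := by exact_mod_cast hq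
  set s := Real.sqrt (q:ℝ) with hsdef
  have hs : 0 < s := Real.sqrt_pos.mpr hq0
  have hq2 : s^2 = (q:ℝ) := Real.sq_sqrt (le_of_lt hq0)
  rw [← hq2]
  constructor
  · rintro ⟨b1, b2, b3, h1, h2, h3, e1, e2, e3⟩
    have := mainFwd s (a1:ℝ) (a2:ℝ) (a3:ℝ) b1 b2 b3 hs h1 h2 h3 e1 (by linarith) (by linarith)
    obtain ⟨c1, c2, c3, ⟨c4l, c4u⟩, c5l, c5u⟩ := this
    exact ⟨c1, c2, c3, ⟨by linarith, by linarith⟩, by linarith, by linarith⟩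
  · rintro ⟨c1, c2, c3, ⟨c4l, c4u⟩, c5l, c5u⟩
    obtain ⟨b1, b2, b3, h1, h2, h3, e1, e2, e3⟩ :=
      mainRev s (a1:ℝ) (a2:ℝ) (a3:ℝ) hs c1 (by linarith) (by linarith)
        (by linarith) (by linarith) (by linarith) (by linarith)
    exact ⟨b1, b2, b3, h1, h2, h3, e1, by linarith, by linarith⟩
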